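/- Fix constants d₁, d₂ > 0. Then ∫_{d₁}^{λ−d₂} ∫_{d₂}^{λ−u₁} (λ−u₁−u₂)/(u₁u₂) du₂ du₁ = λ·(log λ)² + O(λ·log λ) as λ → ∞. More precisely, there exist constants C > 0 and Λ > 0 such that for all λ ≥ Λ, |∫_{d₁}^{λ−d₂} ∫_{d₂}^{λ−u₁} (λ−u₁−u₂)/(u₁u₂) du₂ du₁ − λ(log λ)²| ≤ C·λ·log λ. -/

import Mathlib

open Real MeasureTheory Set intervalIntegral

lemma integral_inv_pos {a b : ℝ} (ha : 0 < a) (hab : a ≤ b) :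
    ∫ x in a..b, x⁻¹ = Real.log b - Real.log a := by
  rw [integral_inv, Real.log_div (by linarith) (by linarith)]
  rw [Set.uIcc_of_le hab]
  intro h
  exact absurd (Set.mem_Icc.mp h).1 (by linarith)

lemma intInt_inv {a b : ℝ} (ha : 0 < a) (hab : a ≤ b) :
    IntervalIntegrable (fun x : ℝ => x⁻¹) volume a b := by
  apply intervalIntegrable_inv
  · intro x hx
    rw [Set.uIcc_of_le hab] at hx
    exact (lt_of_lt_of_le ha (Set.mem_Icc.mp hx).1).ne'
  · exact continuousOn_id

lemma inner_eval (lam u d₂ : ℝ) (hu : 0 < u) (hd : 0 < d₂) (h : d₂ ≤ lam - u) :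
    (∫ u₂ in d₂..(lam - u), (lam - u - u₂) / (u * u₂))
      = (lam - u)/u * (Real.log (lam - u) - Real.log d₂) - (lam - u - d₂)/u := by
  have hcong : ∀ u₂ ∈ Set.uIcc d₂ (lam - u),
      (lam - u - u₂) / (u * u₂) = (lam - u)/u * u₂⁻¹ - (1/u) := by
    intro x hx
    rw [Set.uIcc_of_le h] at hx
    have hx0 : 0 < x := lt_of_lt_of_le hd (Set.mem_Icc.mp hx).1
    field_simp
  rw [intervalIntegral.integral_congr hcong]
  rw [intervalIntegral.integral_sub (((intInt_inv hd h)).const_mul _)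
    (intervalIntegrable_const), intervalIntegral.integral_const_mul,
    integral_inv_pos hd h, intervalIntegral.integral_const]
  ring_nf

lemma g_cont (lam d₂ : ℝ) :
    ContinuousOn (fun u : ℝ => (lam-u)/u * (Real.log (lam-u) - Real.log d₂) - (lam-u-d₂)/u)
      {u : ℝ | 0 < u ∧ u < lam} := by
  have h0 : ∀ x ∈ {u : ℝ | 0 < u ∧ u < lam}, x ≠ 0 := fun x hx => hx.1.ne'
  have h1 : ∀ x ∈ {u : ℝ | 0 < u ∧ u < lam}, lam - x ≠ 0 := fun x hx => by
    have := hx.2; intro h; linarith [sub_eq_zero.mp h]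
  apply ContinuousOn.sub
  · apply ContinuousOn.mul
    · exact ContinuousOn.div (by fun_prop) continuousOn_id h0
    · exact ContinuousOn.sub (ContinuousOn.log (by fun_prop) (fun x hx => by
        have := hx.2; intro h; nlinarith [sub_eq_zero.mp h]))
        continuousOn_const
  · exact ContinuousOn.div (by fun_prop) continuousOn_id h0

lemma g_nonneg {lam d₂ u : ℝ} (hu : 0 < u) (hd : 0 < d₂) (h : d₂ ≤ lam - u) :
    0 ≤ (lam-u)/u * (Real.log (lam-u) - Real.log d₂) - (lam-u-d₂)/u := by
  set t := lam - u with ht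
  have ht0 : 0 < t := lt_of_lt_of_le hd h
  have hlog : Real.log (d₂/t) ≤ d₂/t - 1 := Real.log_le_sub_one_of_pos (by positivity)
  rw [Real.log_div hd.ne' ht0.ne'] at hlog
  have hdt : d₂/t - 1 ≤ 0 := by
    have : d₂/t ≤ 1 := (div_le_one ht0).mpr h
    linarith
  have key : t - d₂ ≤ t * (Real.log t - Real.log d₂) := by
    have h2 : 1 - d₂/t ≤ Real.log t - Real.log d₂ := by linarith
    have h4 := mul_le_mul_of_nonneg_left h2 ht0.le
    have h3 : t * (1 - d₂/t) = t - d₂ := by field_simp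
    rw [h3] at h4
    exact h4
  have hrw : (lam-u)/u * (Real.log (lam-u) - Real.log d₂) - (lam-u-d₂)/u
      = (t * (Real.log t - Real.log d₂) - (t - d₂)) / u := by
    field_simp
    rw [ht]
  rw [hrw]
  apply div_nonneg (by linarith) hu.le

set_option maxHeartbeats 1600000 in
theorem double_integral_asymptotics (d₁ d₂ : ℝ) (hd₁ : 0 < d₁) (hd₂ : 0 < d₂) :
    ∃ C Λ : ℝ, 0 < C ∧ 0 < Λ ∧ ∀ lam : ℝ, Λ ≤ lam →
      |(∫ u₁ in d₁..(lam - d₂), ∫ u₂ in d₂..(lam - u₁),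
          (lam - u₁ - u₂) / (u₁ * u₂)) - lam * (Real.log lam)^2|
        ≤ C * lam * Real.log lam := by
  set a1 := Real.log d₁ with ha1
  set b1 := Real.log d₂ with hb1
  set B : ℝ := 2 + |a1| + |b1| with hBdef
  have hB2 : 2 ≤ B := by
    have := abs_nonneg a1; have := abs_nonneg b1; simp only [hBdef]; linarith
  refine ⟨4*B^2, max (Real.exp (B+2)) (2*(d₁+d₂)+2), by nlinarith [hB2], lt_of_lt_of_le (by positivity) (le_max_right _ _), ?_⟩
  intro lam hlam
  have hlam2 : 2*(d₁+d₂)+2 ≤ lam := le_trans (le_max_right _ _) hlam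
  have hlampos : 0 < lam := by nlinarith [hd₁, hd₂]
  have hexp : Real.exp (B+2) ≤ lam := le_trans (le_max_left _ _) hlam
  have hl : B + 2 ≤ Real.log lam := by
    have := Real.log_le_log (Real.exp_pos _) hexp
    simpa [Real.log_exp] using this
  set ℓ := Real.log lam with hldef
  have hl4 : 4 ≤ ℓ := by linarith
  have ha : |a1| ≤ B - 2 := by have := abs_nonneg b1; simp only [hBdef]; linarith
  have hb : |b1| ≤ B - 2 := by have := abs_nonneg a1; simp only [hBdef]; linarith
  clear_value a1 b1 B ℓ
  have hhalf1 : d₁ ≤ lam/2 := by linarith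
  have hhalf2 : lam/2 ≤ lam - d₂ := by linarith
  have hd1d2 : d₁ ≤ lam - d₂ := le_trans hhalf1 hhalf2
  have hlog2 : Real.log 2 ≤ 1 := by
    have := Real.log_le_sub_one_of_pos (by norm_num : (0:ℝ) < 2); linarith
  have hlog2pos : 0 < Real.log 2 := Real.log_pos (by norm_num)
  -- rewrite inner integral
  have hIg : (∫ u₁ in d₁..(lam - d₂), ∫ u₂ in d₂..(lam - u₁), (lam - u₁ - u₂) / (u₁ * u₂))
      = ∫ u in d₁..(lam - d₂), ((lam-u)/u * (Real.log (lam-u) - Real.log d₂) - (lam-u-d₂)/u) := by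
    apply intervalIntegral.integral_congr
    intro u hu
    rw [Set.uIcc_of_le hd1d2] at hu
    obtain ⟨h1, h2⟩ := Set.mem_Icc.mp hu
    exact inner_eval lam u d₂ (lt_of_lt_of_le hd₁ h1) hd₂ (by linarith)
  rw [hIg]
  -- integrability of g on subintervals
  have hsub : ∀ p q : ℝ, d₁ ≤ p → p ≤ q → q ≤ lam - d₂ →
      IntervalIntegrable (fun u : ℝ => (lam-u)/u * (Real.log (lam-u) - Real.log d₂) - (lam-u-d₂)/u)
        volume p q := by
    intro p q h1 h2 h3
    apply ContinuousOn.intervalIntegrable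
    apply (g_cont lam d₂).mono
    rw [Set.uIcc_of_le h2]
    intro x hx
    obtain ⟨hx1, hx2⟩ := Set.mem_Icc.mp hx
    exact ⟨by linarith, by linarith⟩
  -- UPPER BOUND
  have hub : (∫ u in d₁..(lam-d₂), ((lam-u)/u * (Real.log (lam-u) - Real.log d₂) - (lam-u-d₂)/u))
      ≤ lam * (ℓ - b1) * (Real.log (lam - d₂) - a1) := by
    have hLmax : 0 ≤ ℓ - b1 := by linarith [le_abs_self b1]
    have hmono := intervalIntegral.integral_mono_on hd1d2 (hsub _ _ le_rfl hd1d2 le_rfl)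
        ((intInt_inv hd₁ hd1d2).const_mul (lam * (ℓ - b1)))
        (fun u hu => by
          obtain ⟨h1, h2⟩ := Set.mem_Icc.mp hu
          have hu0 : 0 < u := lt_of_lt_of_le hd₁ h1
          have ht0 : 0 < lam - u := by linarith
          have hL0 : 0 ≤ Real.log (lam-u) - Real.log d₂ :=
            sub_nonneg.mpr (Real.log_le_log hd₂ (by linarith))
          have hLle : Real.log (lam-u) ≤ ℓ := by rw [hldef]; exact Real.log_le_log ht0 (by linarith)
          have hrw : (lam-u)/u * (Real.log (lam-u) - Real.log d₂) - (lam-u-d₂)/u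
              = ((lam-u) * (Real.log (lam-u) - Real.log d₂) - (lam-u-d₂)) / u := by
            field_simp
          rw [hrw]
          have hnum : (lam-u) * (Real.log (lam-u) - Real.log d₂) - (lam-u-d₂)
              ≤ lam * (ℓ - b1) := by
            nlinarith [mul_le_mul_of_nonneg_left (show Real.log (lam-u) - Real.log d₂ ≤ ℓ - b1 by
              simp only [hb1]; linarith) ht0.le,
              mul_le_mul_of_nonneg_right (show lam - u ≤ lam by linarith) hLmax]
          calc ((lam-u) * (Real.log (lam-u) - Real.log d₂) - (lam-u-d₂)) / u
              ≤ (lam * (ℓ - b1)) / u := div_le_div_of_nonneg_right hnum hu0.le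
            _ = lam * (ℓ - b1) * u⁻¹ := by rw [div_eq_mul_inv])
    rw [intervalIntegral.integral_const_mul, integral_inv_pos hd₁ hd1d2] at hmono
    calc _ ≤ _ := hmono
      _ = lam * (ℓ - b1) * (Real.log (lam - d₂) - a1) := by rw [ha1]
  have hub2 : (∫ u in d₁..(lam-d₂), ((lam-u)/u * (Real.log (lam-u) - Real.log d₂) - (lam-u-d₂)/u))
      ≤ lam * (ℓ - b1) * (ℓ - a1) := by
    have hLmax : 0 ≤ ℓ - b1 := by linarith [le_abs_self b1]
    have hld : Real.log (lam - d₂) ≤ ℓ := by rw [hldef]; exact Real.log_le_log (by linarith) (by linarith)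
    nlinarith [hub, mul_le_mul_of_nonneg_left (sub_le_sub_right hld a1)
      (mul_nonneg hlampos.le hLmax)]
  -- LOWER BOUND
  have hloghalf : Real.log (lam/2) = ℓ - Real.log 2 := by rw [hldef]; exact Real.log_div hlampos.ne' two_ne_zero
  have hL0ge : 3 ≤ ℓ - Real.log 2 - b1 := by linarith [le_abs_self b1]
  have hsplitv := intervalIntegral.integral_add_adjacent_intervals
      (hsub _ _ le_rfl hhalf1 hhalf2) (hsub _ _ hhalf1 hhalf2 le_rfl)
  have hpos2 : 0 ≤ ∫ u in (lam/2)..(lam-d₂),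
      ((lam-u)/u * (Real.log (lam-u) - Real.log d₂) - (lam-u-d₂)/u) := by
    apply intervalIntegral.integral_nonneg hhalf2
    intro u hu
    obtain ⟨h1, h2⟩ := hu
    exact g_nonneg (by linarith) hd₂ (by linarith)
  have hlb : (ℓ - Real.log 2 - b1 - 1)*lam*(Real.log (lam/2) - a1)
        - (ℓ - Real.log 2 - b1)*(lam/2 - d₁)
      ≤ ∫ u in d₁..(lam/2), ((lam-u)/u * (Real.log (lam-u) - Real.log d₂) - (lam-u-d₂)/u) := by
    have hint1 : IntervalIntegrable (fun u : ℝ => (ℓ - Real.log 2 - b1 - 1)*lam*u⁻¹) volume d₁ (lam/2) :=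
      (intInt_inv hd₁ hhalf1).const_mul _
    have hint2 : IntervalIntegrable
        (fun u : ℝ => (ℓ - Real.log 2 - b1 - 1)*lam*u⁻¹ - (ℓ - Real.log 2 - b1))
        volume d₁ (lam/2) := hint1.sub intervalIntegrable_const
    have hmono := intervalIntegral.integral_mono_on hhalf1
        hint2 (hsub _ _ le_rfl hhalf1 hhalf2)
        (fun u hu => by
          obtain ⟨h1, h2⟩ := Set.mem_Icc.mp hu
          have hu0 : 0 < u := lt_of_lt_of_le hd₁ h1
          have ht0 : 0 < lam - u := by linarith
          have hLgeq : ℓ - Real.log 2 - b1 ≤ Real.log (lam-u) - Real.log d₂ := by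
            have := Real.log_le_log (show (0:ℝ) < lam/2 by linarith) (show lam/2 ≤ lam - u by linarith)
            rw [hloghalf] at this
            simp only [hb1]
            linarith
          have hrw : (lam-u)/u * (Real.log (lam-u) - Real.log d₂) - (lam-u-d₂)/u
              = ((lam-u) * (Real.log (lam-u) - Real.log d₂) - (lam-u-d₂)) / u := by
            field_simp
          have hrw2 : (ℓ - Real.log 2 - b1 - 1)*lam*u⁻¹ - (ℓ - Real.log 2 - b1)
              = ((ℓ - Real.log 2 - b1 - 1)*lam - (ℓ - Real.log 2 - b1)*u) / u := by
            field_simp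
          rw [hrw, hrw2]
          apply div_le_div_of_nonneg_right ?_ hu0.le
          nlinarith [mul_le_mul_of_nonneg_left hLgeq ht0.le, hd₂.le, hu0.le])
    rw [intervalIntegral.integral_sub hint1 intervalIntegrable_const,
      intervalIntegral.integral_const_mul, integral_inv_pos hd₁ hhalf1,
      intervalIntegral.integral_const, smul_eq_mul] at hmono
    calc (ℓ - Real.log 2 - b1 - 1)*lam*(Real.log (lam/2) - a1) - (ℓ - Real.log 2 - b1)*(lam/2 - d₁)
        = (ℓ - Real.log 2 - b1 - 1)*lam*(Real.log (lam/2) - Real.log d₁)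
          - (lam/2 - d₁)*(ℓ - Real.log 2 - b1) := by rw [ha1]; ring
      _ ≤ _ := hmono
  have hlow : (ℓ - Real.log 2 - b1 - 1)*lam*((ℓ - Real.log 2) - a1)
        - (ℓ - Real.log 2 - b1)*(lam/2 - d₁)
      ≤ (∫ u in d₁..(lam-d₂), ((lam-u)/u * (Real.log (lam-u) - Real.log d₂) - (lam-u-d₂)/u)) := by
    rw [← hsplitv]
    rw [hloghalf] at hlb
    linarith
  -- FINAL ARITHMETIC
  rw [abs_le]
  have hl0 : (0:ℝ) ≤ ℓ := by linarith
  have hBpos : (0:ℝ) < B := by linarith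
  constructor
  · -- lower: -(C lam ℓ) ≤ I - lam ℓ²
    have h8 : |Real.log 2 + b1 + 1| ≤ B := by
      rw [abs_le]
      constructor
      · have := neg_abs_le b1; linarith
      · have := le_abs_self b1; linarith
    have h9 : |Real.log 2 + a1| ≤ B := by
      rw [abs_le]
      constructor
      · have := neg_abs_le a1; linarith
      · have := le_abs_self a1; linarith
    have r2 : -((Real.log 2 + b1 + 1)*(Real.log 2 + a1)) ≤ B*B := by
      calc -((Real.log 2 + b1 + 1)*(Real.log 2 + a1)) ≤ |(Real.log 2 + b1 + 1)*(Real.log 2 + a1)| := neg_le_abs _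
        _ = |Real.log 2 + b1 + 1| * |Real.log 2 + a1| := abs_mul _ _
        _ ≤ B * B := mul_le_mul h8 h9 (abs_nonneg _) hBpos.le
    have r1 : 2*Real.log 2 + a1 + b1 + 1 ≤ 2*B := by
      have := le_abs_self a1; have := le_abs_self b1; linarith
    have q1 : ℓ*(2*Real.log 2 + a1 + b1 + 1) - (Real.log 2 + b1 + 1)*(Real.log 2 + a1)
        ≤ 3*B^2*ℓ := by
      nlinarith [mul_le_mul_of_nonneg_left r1 hl0,
        mul_nonneg (mul_nonneg (show (0:ℝ) ≤ B - 2 by linarith) hBpos.le) hl0,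
        mul_nonneg (sq_nonneg B) (show (0:ℝ) ≤ ℓ - 1 by linarith)]
    have q2 : (ℓ - Real.log 2 - b1)*(lam/2 - d₁) ≤ 2*ℓ*(lam/2) := by
      apply mul_le_mul
      · have := le_abs_self (-b1); rw [abs_neg] at this; linarith [neg_abs_le b1]
      · linarith
      · linarith
      · linarith
    have final2 : lam*ℓ^2 - ((ℓ - Real.log 2 - b1 - 1)*lam*((ℓ - Real.log 2) - a1)
        - (ℓ - Real.log 2 - b1)*(lam/2 - d₁)) ≤ 4*B^2*lam*ℓ := by
      nlinarith [mul_le_mul_of_nonneg_left q1 hlampos.le, q2,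
        mul_nonneg (mul_nonneg (show (0:ℝ) ≤ B^2 - 1 by nlinarith) hlampos.le) hl0]
    linarith
  · -- upper
    have e1 : -(a1+b1) ≤ 2*B := by
      have := neg_abs_le a1; have := neg_abs_le b1; linarith
    have e2 : a1*b1 ≤ B*B := by
      calc a1*b1 ≤ |a1*b1| := le_abs_self _
        _ = |a1| * |b1| := abs_mul _ _
        _ ≤ B*B := mul_le_mul (by linarith) (by linarith) (abs_nonneg _) hBpos.le
    have p3 : ℓ*(-(a1+b1)) + a1*b1 ≤ 4*B^2*ℓ := by
      nlinarith [mul_le_mul_of_nonneg_left e1 hl0,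
        mul_nonneg (mul_nonneg (show (0:ℝ) ≤ B - 2 by linarith) hBpos.le) hl0,
        mul_nonneg (sq_nonneg B) (show (0:ℝ) ≤ ℓ - 1 by linarith)]
    have final1 : lam*(ℓ - b1)*(ℓ - a1) - lam*ℓ^2 ≤ 4*B^2*lam*ℓ := by
      nlinarith [mul_le_mul_of_nonneg_left p3 hlampos.le]
    linarith
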